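/- Let ω be a non-negative integrable function on the interval (a,b) with ∫_a^b ω(y) dy = 1, and let L_ω[f] = ∫_a^b f(y) ω(y) dy. Let α be a measurable function on (a,b) with α(y) ≠ 0 on (a,b), such that y^i α(y)^j ω(y) is integrable on (a,b) for all 0 ≤ i, j ≤ n+1. Suppose the (n+1)×(n+1) determinant Δ_n, whose first row is (1, L_ω[y], …, L_ω[y^n]) and whose (i+1)-st row for 1 ≤ i ≤ n is (L_{αω}[α^{i−1}], L_{αω}[y α^{i−1}], …, L_{αω}[y^n α^{i−1}]), is nonzero, where L_{αω}[f] = ∫_a^b f(y) α(y) ω(y) dy. Define the polynomial P_n(x) = (1/Δ_n)·det of the matrix obtained by replacing the first row by (1, x, …, x^n). Then ∫_a^b P_n(y) P_n(α(y) + x) ω(y) dy = P_n(x) for all real x. -/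

import Mathlib

open MeasureTheory Set

/-- **Theorem 2** of Dominici, "Polynomial solutions of nonlinear integral equations".
If `α ≠ 0` on `(a,b)` and the determinant `Δₙ` (first row the moments of `ω`, subsequent
rows the moments of `αω` against powers of `α`) is nonzero, then the bordered-determinant
polynomial `Pₙ` satisfies `∫ Pₙ(y) Pₙ(α(y)+x) ω(y) dy = Pₙ(x)`. -/
theorem polynomial_solution_alpha_det (a b : ℝ) (ω α : ℝ → ℝ) (n : ℕ)
    (hω_nonneg : ∀ y ∈ Ioo a b, 0 ≤ ω y)
    (hω_int : IntegrableOn ω (Ioo a b))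
    (hω_norm : (∫ y in Ioo a b, ω y) = 1)
    (hα_meas : Measurable α)
    (hα_ne_zero : ∀ y ∈ Ioo a b, α y ≠ 0)
    (h_int : ∀ i j : ℕ, i ≤ n + 1 → j ≤ n + 1 →
      IntegrableOn (fun y => y ^ i * α y ^ j * ω y) (Ioo a b))
    (Δ : ℝ)
    (hΔ : Δ = (Matrix.of fun i j : Fin (n + 1) =>
      if (i : ℕ) = 0 then
        (if (j : ℕ) = 0 then (1 : ℝ) else ∫ y in Ioo a b, y ^ (j : ℕ) * ω y)
      else
        ∫ y in Ioo a b, y ^ (j : ℕ) * α y ^ ((i : ℕ) - 1) * α y * ω y).det)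
    (hΔ_ne : Δ ≠ 0)
    (P : ℝ → ℝ)
    (hP : ∀ x : ℝ, P x = (1 / Δ) * (Matrix.of fun i j : Fin (n + 1) =>
      if (i : ℕ) = 0 then x ^ (j : ℕ)
      else
        ∫ y in Ioo a b, y ^ (j : ℕ) * α y ^ ((i : ℕ) - 1) * α y * ω y).det) :
    ∀ x : ℝ, (∫ y in Ioo a b, P y * P (α y + x) * ω y) = P x := by
  -- the fixed lower rows
  set R : Fin (n + 1) → Fin (n + 1) → ℝ := fun i j =>
    ∫ y in Ioo a b, y ^ (j : ℕ) * α y ^ ((i : ℕ) - 1) * α y * ω y with hR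
  -- cofactor minors
  set D : Fin (n + 1) → ℝ := fun j =>
    ((Matrix.of R).submatrix Fin.succ j.succAbove).det with hD
  -- Laplace expansion: det of any matrix with first row `v` and lower rows `R`.
  have key : ∀ v : Fin (n + 1) → ℝ,
      (Matrix.of fun i j : Fin (n + 1) =>
        if (i : ℕ) = 0 then v j else R i j).det
      = ∑ j : Fin (n + 1), (-1 : ℝ) ^ (j : ℕ) * v j * D j := by
    intro v
    rw [Matrix.det_succ_row_zero]
    refine Finset.sum_congr rfl fun j _ => ?_
    have h0 : (Matrix.of fun i j : Fin (n + 1) =>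
        if (i : ℕ) = 0 then v j else R i j) 0 j = v j := by
      simp
    rw [h0]
    have h1 : ((Matrix.of fun i j : Fin (n + 1) =>
        if (i : ℕ) = 0 then v j else R i j).submatrix Fin.succ j.succAbove).det = D j := by
      apply congrArg Matrix.det
      ext i k
      simp [Matrix.submatrix_apply, Matrix.of_apply, Fin.val_succ]
    rw [h1]
  -- the coefficients of P
  set c : Fin (n + 1) → ℝ := fun j => (1 / Δ) * ((-1 : ℝ) ^ (j : ℕ) * D j) with hc
  have hP' : ∀ t : ℝ, P t = ∑ j : Fin (n + 1), c j * t ^ (j : ℕ) := by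
    intro t
    rw [hP t, key (fun j => t ^ (j : ℕ)), Finset.mul_sum]
    exact Finset.sum_congr rfl fun j _ => by simp [hc]; ring
  -- moments
  have hI : ∀ k : ℕ, k ≤ n →
      (∫ y in Ioo a b, P y * α y ^ k * ω y) = if k = 0 then 1 else 0 := by
    intro k hk
    have hsum : ∀ y : ℝ, P y * α y ^ k * ω y
        = ∑ j : Fin (n + 1), c j * (y ^ (j : ℕ) * α y ^ k * ω y) := by
      intro y
      rw [hP' y, Finset.sum_mul, Finset.sum_mul]
      exact Finset.sum_congr rfl fun j _ => by ring
    have hint : ∀ j : Fin (n + 1),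
        IntegrableOn (fun y => y ^ (j : ℕ) * α y ^ k * ω y) (Ioo a b) :=
      fun j => h_int j k (le_trans j.is_le (Nat.le_succ n)) (le_trans hk (Nat.le_succ n))
    calc (∫ y in Ioo a b, P y * α y ^ k * ω y)
        = ∫ y in Ioo a b, ∑ j : Fin (n + 1), c j * (y ^ (j : ℕ) * α y ^ k * ω y) := by
          simp only [hsum]
      _ = ∑ j : Fin (n + 1), ∫ y in Ioo a b, c j * (y ^ (j : ℕ) * α y ^ k * ω y) :=
          integral_finset_sum _ (fun j _ => (hint j).const_mul _)
      _ = ∑ j : Fin (n + 1), c j * ∫ y in Ioo a b, y ^ (j : ℕ) * α y ^ k * ω y := by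
          simp only [integral_const_mul]
      _ = (1 / Δ) * ∑ j : Fin (n + 1), (-1 : ℝ) ^ (j : ℕ) *
            (∫ y in Ioo a b, y ^ (j : ℕ) * α y ^ k * ω y) * D j := by
          rw [Finset.mul_sum]
          exact Finset.sum_congr rfl fun j _ => by simp [hc]; ring
      _ = (1 / Δ) * (Matrix.of fun i j : Fin (n + 1) =>
            if (i : ℕ) = 0 then (∫ y in Ioo a b, y ^ (j : ℕ) * α y ^ k * ω y)
            else R i j).det := by
          rw [key]
      _ = if k = 0 then 1 else 0 := by
          rcases Nat.eq_zero_or_pos k with hk0 | hk0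
          · subst hk0
            simp only [if_pos rfl]
            have hmat : (Matrix.of fun i j : Fin (n + 1) =>
                if (i : ℕ) = 0 then (∫ y in Ioo a b, y ^ (j : ℕ) * α y ^ 0 * ω y)
                else R i j)
                = (Matrix.of fun i j : Fin (n + 1) =>
                    if (i : ℕ) = 0 then
                      (if (j : ℕ) = 0 then (1 : ℝ) else ∫ y in Ioo a b, y ^ (j : ℕ) * ω y)
                    else R i j) := by
              ext i j
              simp only [Matrix.of_apply]
              by_cases hi : (i : ℕ) = 0
              · rw [if_pos hi, if_pos hi]
                by_cases hj : (j : ℕ) = 0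
                · rw [if_pos hj, hj]
                  simpa using hω_norm
                · rw [if_neg hj]
                  apply integral_congr_ae
                  filter_upwards with y
                  simp
              · rw [if_neg hi, if_neg hi]
            rw [hmat, ← hΔ]
            field_simp
            simp
          · rw [if_neg (Nat.pos_iff_ne_zero.mp hk0)]
            have hrow : (Matrix.of fun i j : Fin (n + 1) =>
                if (i : ℕ) = 0 then (∫ y in Ioo a b, y ^ (j : ℕ) * α y ^ k * ω y)
                else R i j).det = 0 := by
              apply Matrix.det_zero_of_row_eq (i := (0 : Fin (n + 1)))
                (j := ⟨k, by omega⟩)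
              · intro h
                have : (0 : ℕ) = k := congrArg Fin.val h
                omega
              · funext j
                simp only [Matrix.of_apply, Fin.val_zero, if_pos rfl]
                have : (⟨k, by omega⟩ : Fin (n + 1)).val = k := rfl
                rw [if_neg (by omega : ¬((⟨k, by omega⟩ : Fin (n + 1)) : ℕ) = 0)]
                simp only [hR, this]
                apply integral_congr_ae
                filter_upwards with y
                have hα : α y ^ k = α y ^ (k - 1) * α y := by
                  rw [← pow_succ]
                  congr 1
                  omega
                rw [hα]; ring
            rw [hrow, mul_zero]
  -- integrability of P·αᵏ·ω
  have hPint : ∀ k : ℕ, k ≤ n →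
      IntegrableOn (fun y => P y * α y ^ k * ω y) (Ioo a b) := by
    intro k hk
    have hsum : (fun y => P y * α y ^ k * ω y)
        = fun y => ∑ j : Fin (n + 1), c j * (y ^ (j : ℕ) * α y ^ k * ω y) := by
      funext y
      rw [hP' y, Finset.sum_mul, Finset.sum_mul]
      exact Finset.sum_congr rfl fun j _ => by ring
    rw [hsum]
    exact integrable_finset_sum _ (fun j _ =>
      (h_int j k (le_trans j.is_le (Nat.le_succ n)) (le_trans hk (Nat.le_succ n))).const_mul _)
  -- main computation
  intro x
  have expand : ∀ y : ℝ, P y * P (α y + x) * ω y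
      = ∑ j : Fin (n + 1), ∑ k ∈ Finset.range ((j : ℕ) + 1),
          (c j * x ^ ((j : ℕ) - k) * ((j : ℕ).choose k : ℝ)) *
            (P y * α y ^ k * ω y) := by
    intro y
    rw [hP' (α y + x), Finset.mul_sum, Finset.sum_mul]
    refine Finset.sum_congr rfl fun j _ => ?_
    rw [add_pow, Finset.mul_sum, Finset.mul_sum, Finset.sum_mul]
    exact Finset.sum_congr rfl fun k _ => by ring
  calc (∫ y in Ioo a b, P y * P (α y + x) * ω y)
      = ∫ y in Ioo a b, ∑ j : Fin (n + 1), ∑ k ∈ Finset.range ((j : ℕ) + 1),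
          (c j * x ^ ((j : ℕ) - k) * ((j : ℕ).choose k : ℝ)) *
            (P y * α y ^ k * ω y) := by simp only [expand]
    _ = ∑ j : Fin (n + 1), ∑ k ∈ Finset.range ((j : ℕ) + 1),
          (c j * x ^ ((j : ℕ) - k) * ((j : ℕ).choose k : ℝ)) *
            ∫ y in Ioo a b, P y * α y ^ k * ω y := by
        rw [integral_finset_sum _ (fun j _ => integrable_finset_sum _ (fun k hk =>
          (hPint k (by
            have := Finset.mem_range.mp hk
            have := j.is_le
            omega)).const_mul _))]
        refine Finset.sum_congr rfl fun j _ => ?_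
        rw [integral_finset_sum _ (fun k hk =>
          (hPint k (by
            have := Finset.mem_range.mp hk
            have := j.is_le
            omega)).const_mul _)]
        exact Finset.sum_congr rfl fun k _ => integral_const_mul _ _
    _ = ∑ j : Fin (n + 1), c j * x ^ (j : ℕ) := by
        refine Finset.sum_congr rfl fun j _ => ?_
        have hstep : ∀ k ∈ Finset.range ((j : ℕ) + 1),
            (c j * x ^ ((j : ℕ) - k) * ((j : ℕ).choose k : ℝ)) *
              (∫ y in Ioo a b, P y * α y ^ k * ω y)
            = if k = 0 then c j * x ^ (j : ℕ) else 0 := by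
          intro k hk
          have hkn : k ≤ n := by
            have := Finset.mem_range.mp hk
            have := j.is_le
            omega
          rw [hI k hkn]
          by_cases hk0 : k = 0
          · subst hk0; simp
          · simp [hk0]
        rw [Finset.sum_congr rfl hstep, Finset.sum_ite_eq' (Finset.range ((j : ℕ) + 1))]
        simp
    _ = P x := (hP' x).symm
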